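/- Let G = (V,E) with V = {1,...,n}, let N_m = {1,...,m}, and for each m let G*(N_m) be the graph on N_m with edge {u,v} iff there is a path in G between u and v whose intermediate vertices lie in V − N_m. Fix 2 ≤ m ≤ n and a subset U ⊆ N_{m−1}. If G*(N_{m−1}) \ U is disconnected, then both G*(N_m) \ (U ∪ {m}) and G*(N_m) \ U are disconnected. -/

import Mathlib

/-- The graph `G*(S)` on vertex subset `S`: distinct `u, v ∈ S` are adjacent iff
there is a path (walk) between `u` and `v` in `G` all of whose intermediate
vertices lie outside `S`. Vertices outside `S` are isolated. -/
def GStar {V : Type} (G : SimpleGraph V) (S : Set V) : SimpleGraph V where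
  Adj u v := u ≠ v ∧ u ∈ S ∧ v ∈ S ∧
    ∃ p : G.Walk u v, ∀ x ∈ p.support, x ≠ u → x ≠ v → x ∉ S
  symm := ⟨by
    rintro u v ⟨hne, hu, hv, p, hp⟩
    refine ⟨hne.symm, hv, hu, p.reverse, ?_⟩
    intro x hx hxv hxu
    exact hp x (by simpa [SimpleGraph.Walk.support_reverse] using hx) hxu hxv⟩
  loopless := ⟨fun u h => h.1 rfl⟩

/-- `a` and `b` are joined by a walk in `G` whose vertices all lie in `A`
(i.e. they are in the same component of the induced subgraph on `A`). -/
def ReachIn {V : Type} (G : SimpleGraph V) (A : Set V) (a b : V) : Prop :=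
  ∃ p : G.Walk a b, ∀ x ∈ p.support, x ∈ A

/-- The vertex set `A` is connected in `H` (restricted to `A`). -/
def ConnOn {V : Type} (H : SimpleGraph V) (A : Set V) : Prop :=
  A.Nonempty ∧ ∀ a ∈ A, ∀ b ∈ A, ReachIn H A a b

/-- The vertex set `A` is disconnected in `H` (restricted to `A`). -/
def DiscOn {V : Type} (H : SimpleGraph V) (A : Set V) : Prop :=
  ∃ a ∈ A, ∃ b ∈ A, ¬ ReachIn H A a b

/-- With `V = Fin n` (vertices `1, …, n`), `N_m` the first `m`
vertices, and `G*(N_m)` as above: if `G*(N_{m−1}) \ U` is disconnected (for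
`U ⊆ N_{m−1}`), then both `G*(N_m) \ (U ∪ {m})` and `G*(N_m) \ U` are
disconnected, where `m` denotes the last vertex of `N_m`. -/
lemma gstar_mono_adj {V : Type} (G : SimpleGraph V) {S' S : Set V} (hSS : S' ⊆ S)
    {u v : V} (hu : u ∈ S') (hv : v ∈ S') (h : (GStar G S).Adj u v) :
    (GStar G S').Adj u v := by
  obtain ⟨hne, -, -, p, hp⟩ := h
  exact ⟨hne, hu, hv, p, fun x hx hxu hxv hxS => hp x hx hxu hxv (hSS hxS)⟩

lemma gstar_two_step {V : Type} (G : SimpleGraph V) {S' S : Set V} (hSS : S' ⊆ S)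
    {w : V} (hw : w ∉ S') {u v : V} (hu : u ∈ S') (hv : v ∈ S') (huv : u ≠ v)
    (h1 : (GStar G S).Adj u w) (h2 : (GStar G S).Adj w v) :
    (GStar G S').Adj u v := by
  obtain ⟨hne1, -, -, p1, hp1⟩ := h1
  obtain ⟨hne2, -, -, p2, hp2⟩ := h2
  refine ⟨huv, hu, hv, p1.append p2, ?_⟩
  intro x hx hxu hxv
  rw [SimpleGraph.Walk.support_append, List.mem_append] at hx
  rcases hx with hx | hx
  · by_cases hxw : x = w
    · subst hxw; exact hw
    · exact fun hxS => hp1 x hx hxu hxw (hSS hxS)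
  · have hx' : x ∈ p2.support := List.mem_of_mem_tail hx
    by_cases hxw : x = w
    · subst hxw; exact hw
    · exact fun hxS => hp2 x hx' hxw hxv (hSS hxS)

lemma reachIn_cons {V : Type} {H : SimpleGraph V} {B : Set V} {a c b : V}
    (ha : a ∈ B) (h : H.Adj a c) (hr : ReachIn H B c b) : ReachIn H B a b := by
  obtain ⟨p, hp⟩ := hr
  refine ⟨.cons h p, ?_⟩
  intro x hx
  rw [SimpleGraph.Walk.support_cons, List.mem_cons] at hx
  rcases hx with rfl | hx
  · exact ha
  · exact hp x hx

lemma key {V : Type} (G : SimpleGraph V) {S' S : Set V} (hSS : S' ⊆ S)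
    {w : V} (hw : w ∉ S') {B : Set V} (hB : B ⊆ S') :
    ∀ {a b : V} (p : (GStar G S).Walk a b),
      (∀ x ∈ p.support, x ∈ B ∪ {w}) → b ≠ w →
      (a ≠ w → ReachIn (GStar G S') B a b) ∧
      (∀ c ∈ B, (GStar G S).Adj c w → a = w → ReachIn (GStar G S') B c b) := by
  intro a b p
  induction p with
  | @nil a =>
    intro hsup hb
    constructor
    · intro haw
      have haB : a ∈ B := by
        have h' := hsup a (by simp)
        rcases h' with h' | h'
        · exact h'
        · exact absurd h' haw
      exact ⟨.nil, by intro x hx; simp at hx; subst hx; exact haB⟩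
    · intro c hc hadj haw; exact absurd haw hb
  | @cons a2 c2 b2 h p ih =>
    intro hsup hb
    have hsup' : ∀ x ∈ p.support, x ∈ B ∪ {w} := fun x hx =>
      hsup x (by rw [SimpleGraph.Walk.support_cons]; exact List.mem_cons_of_mem _ hx)
    have IH := ih hsup' hb
    have hcmem : c2 ∈ B ∪ {w} := hsup' c2 p.start_mem_support
    constructor
    · intro haw
      have haB : a2 ∈ B := by
        have := hsup a2 (by simp)
        rcases this with h' | h'
        · exact h'
        · exact absurd h' haw
      by_cases hcw : c2 = w
      · subst hcw
        exact IH.2 a2 haB h rfl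
      · have hcB : c2 ∈ B := by rcases hcmem with h' | h'; exact h'; exact absurd h' hcw
        exact reachIn_cons haB (gstar_mono_adj G hSS (hB haB) (hB hcB) h) (IH.1 hcw)
    · intro c2' hc' hadj haw
      rw [haw] at h
      have hcw : c2 ≠ w := h.ne.symm
      have hcB : c2 ∈ B := by rcases hcmem with h' | h'; exact h'; exact absurd h' hcw
      have reach := IH.1 hcw
      by_cases hcc : c2' = c2
      · subst hcc; exact reach
      · exact reachIn_cons hc' (gstar_two_step G hSS hw (hB hc') (hB hcB) hcc hadj h) reach

theorem stmt_17 {n : ℕ} (G : SimpleGraph (Fin n)) (m : ℕ)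
    (hm : 2 ≤ m) (hmn : m ≤ n)
    (U : Set (Fin n)) (hU : ∀ u ∈ U, (u : ℕ) < m - 1)
    (hdisc : DiscOn (GStar G {i : Fin n | (i : ℕ) < m - 1})
      ({i : Fin n | (i : ℕ) < m - 1} \ U)) :
    DiscOn (GStar G {i : Fin n | (i : ℕ) < m})
      ({i : Fin n | (i : ℕ) < m} \ (U ∪ {(⟨m - 1, by omega⟩ : Fin n)})) ∧
    DiscOn (GStar G {i : Fin n | (i : ℕ) < m})
      ({i : Fin n | (i : ℕ) < m} \ U) := by
  set w : Fin n := ⟨m - 1, by omega⟩ with hwdef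
  set S' : Set (Fin n) := {i : Fin n | (i : ℕ) < m - 1} with hS'
  set S : Set (Fin n) := {i : Fin n | (i : ℕ) < m} with hSdef
  set B : Set (Fin n) := S' \ U with hBdef
  have hSS : S' ⊆ S := by intro i hi; simp only [hS', hSdef, Set.mem_setOf_eq] at *; omega
  have hw : w ∉ S' := by simp [hS', hwdef]
  have hB : B ⊆ S' := Set.diff_subset
  obtain ⟨a, ha, b, hb, hnr⟩ := hdisc
  have haS' : (a : ℕ) < m - 1 := ha.1
  have hbS' : (b : ℕ) < m - 1 := hb.1
  have haw : a ≠ w := by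
    intro e; rw [e] at haS'; simp [hwdef] at haS'
  have hbw : b ≠ w := by
    intro e; rw [e] at hbS'; simp [hwdef] at hbS'
  have hset1 : S \ (U ∪ {w}) = B := by
    ext i
    simp only [hBdef, hSdef, hS', Set.mem_diff, Set.mem_setOf_eq, Set.mem_union,
      Set.mem_singleton_iff, not_or, Fin.ext_iff, hwdef]
    constructor
    · rintro ⟨hi, hiu, hiw⟩
      exact ⟨by omega, hiu⟩
    · rintro ⟨hi, hiu⟩
      exact ⟨by omega, hiu, by omega⟩
  have hsub : (S \ U) ⊆ B ∪ {w} := by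
    rintro i ⟨hi, hiu⟩
    simp only [hSdef, Set.mem_setOf_eq] at hi
    by_cases h : (i : ℕ) < m - 1
    · exact Or.inl ⟨h, hiu⟩
    · exact Or.inr (by simp only [Set.mem_singleton_iff, Fin.ext_iff, hwdef]; omega)
  constructor
  · refine ⟨a, hset1 ▸ ha, b, hset1 ▸ hb, ?_⟩
    rintro ⟨p, hp⟩
    have hsup : ∀ x ∈ p.support, x ∈ B ∪ {w} := fun x hx => Or.inl (hset1 ▸ hp x hx)
    exact hnr ((key G hSS hw hB p hsup hbw).1 haw)
  · refine ⟨a, ⟨by simp only [hSdef, Set.mem_setOf_eq]; omega, ha.2⟩,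
      b, ⟨by simp only [hSdef, Set.mem_setOf_eq]; omega, hb.2⟩, ?_⟩
    rintro ⟨p, hp⟩
    have hsup : ∀ x ∈ p.support, x ∈ B ∪ {w} := fun x hx => hsub (hp x hx)
    exact hnr ((key G hSS hw hB p hsup hbw).1 haw)
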